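/- Let B be a Banach space with predual B_*, ν_1,…,ν_n ∈ B_* linearly independent, y ∈ ℝⁿ \ {0}, M_y := {f ∈ B : ⟨ν_j, f⟩ = y_j ∀j}, and suppose ν̂ ∈ span{ν_j} satisfies (‖ν̂‖_{B_*} ∂‖·‖_{B_*}(ν̂)) ∩ M_y ≠ ∅. Then the solution set S(y) of the minimum norm interpolation problem equals (‖ν̂‖_{B_*} ∂‖·‖_{B_*}(ν̂)) ∩ M_y. -/
import Mathlib


open Pointwise
open scoped Classical

/-- The subdifferential of the dual norm `‖·‖_{B_*}` at `μ ∈ P`, viewed as a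
subset of `B = P →L[ℝ] ℝ`. -/
noncomputable def subdiffDualNorm {P : Type*} [NormedAddCommGroup P] [NormedSpace ℝ P]
    (μ : P) : Set (P →L[ℝ] ℝ) :=
  if μ = 0 then Metric.closedBall 0 1 else {w | ‖w‖ = 1 ∧ w μ = ‖μ‖}

/-- If `ν' ∈ span{ν_j}` satisfies `(‖ν'‖ ∂‖·‖_{B_*}(ν')) ∩ M_y ≠ ∅`, then the MNI
solution set `S(y)` equals `(‖ν'‖ ∂‖·‖_{B_*}(ν')) ∩ M_y`. -/
theorem stmt_9 {P : Type*} [NormedAddCommGroup P] [NormedSpace ℝ P] [CompleteSpace P]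
    {n : ℕ} (ν : Fin n → P) (hν : LinearIndependent ℝ ν)
    (y : Fin n → ℝ) (hy : y ≠ 0) (ν' : P)
    (hν'V : ν' ∈ Submodule.span ℝ (Set.range ν))
    (hne : ((‖ν'‖ • subdiffDualNorm ν') ∩ {f : P →L[ℝ] ℝ | ∀ j, f (ν j) = y j}).Nonempty) :
    {f : P →L[ℝ] ℝ | (∀ j, f (ν j) = y j) ∧
        ∀ g : P →L[ℝ] ℝ, (∀ j, g (ν j) = y j) → ‖f‖ ≤ ‖g‖} =
      (‖ν'‖ • subdiffDualNorm ν') ∩ {f : P →L[ℝ] ℝ | ∀ j, f (ν j) = y j} := by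
  have hν0 : ν' ≠ 0 := by
    rintro rfl
    obtain ⟨f, hf, hfM⟩ := hne
    rw [norm_zero, Set.zero_smul_set] at hf
    · apply hy
      funext j
      have : f = 0 := hf
      rw [← hfM j, this]; simp
    · exact ⟨0, by simp [subdiffDualNorm]⟩
  have hsub : subdiffDualNorm ν' = {w : P →L[ℝ] ℝ | ‖w‖ = 1 ∧ w ν' = ‖ν'‖} :=
    if_neg hν0
  obtain ⟨f₀, hf₀s, hf₀M⟩ := hne
  rw [hsub] at hf₀s
  obtain ⟨w₀, hw₀, hw₀f⟩ := hf₀s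
  beta_reduce at hw₀f
  have hf₀norm : ‖f₀‖ = ‖ν'‖ := by
    have h := norm_smul ‖ν'‖ w₀
    rw [← hw₀f, h, Real.norm_eq_abs, abs_of_nonneg (norm_nonneg _), hw₀.1, mul_one]
  have hf₀ν' : f₀ ν' = ‖ν'‖ * ‖ν'‖ := by
    rw [← hw₀f]; simp [hw₀.2]
  -- any g in M_y agrees with f₀ on ν'
  have key : ∀ g : P →L[ℝ] ℝ, (∀ j, g (ν j) = y j) → g ν' = ‖ν'‖ * ‖ν'‖ := by
    intro g hg
    have hker : ν' ∈ LinearMap.ker ((g : P →ₗ[ℝ] ℝ) - (f₀ : P →ₗ[ℝ] ℝ)) := by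
      refine Submodule.span_le.2 ?_ hν'V
      rintro _ ⟨j, rfl⟩
      simp [LinearMap.mem_ker, hg j, hf₀M j]
    have h0 : g ν' - f₀ ν' = 0 := hker
    have := sub_eq_zero.mp h0
    rw [this, hf₀ν']
  -- lower bound for norms on M_y
  have hlow : ∀ g : P →L[ℝ] ℝ, (∀ j, g (ν j) = y j) → ‖ν'‖ ≤ ‖g‖ := by
    intro g hg
    have h1 : ‖ν'‖ * ‖ν'‖ ≤ ‖g‖ * ‖ν'‖ := by
      calc ‖ν'‖ * ‖ν'‖ = g ν' := (key g hg).symm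
        _ ≤ |g ν'| := le_abs_self _
        _ ≤ ‖g‖ * ‖ν'‖ := g.le_opNorm ν'
    exact le_of_mul_le_mul_right h1 (norm_pos_iff.2 hν0)
  ext f
  simp only [Set.mem_setOf_eq, Set.mem_inter_iff, hsub]
  constructor
  · rintro ⟨hfM, hmin⟩
    refine ⟨?_, hfM⟩
    have hf : ‖f‖ = ‖ν'‖ := le_antisymm (by simpa [hf₀norm] using hmin f₀ hf₀M) (hlow f hfM)
    refine ⟨‖ν'‖⁻¹ • f, ⟨?_, ?_⟩, ?_⟩
    · have h := norm_smul ‖ν'‖⁻¹ f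
      rw [h, Real.norm_eq_abs, abs_of_nonneg (inv_nonneg.2 (norm_nonneg _)), hf]
      exact inv_mul_cancel₀ (norm_ne_zero_iff.2 hν0)
    · simp only [ContinuousLinearMap.smul_apply, key f hfM, smul_eq_mul]
      field_simp
    · show ‖ν'‖ • ‖ν'‖⁻¹ • f = f
      rw [smul_smul]
      rw [mul_inv_cancel₀ (norm_ne_zero_iff.2 hν0), one_smul]
  · rintro ⟨⟨w, ⟨hw1, hwv⟩, hwf⟩, hfM⟩
    beta_reduce at hwf
    refine ⟨hfM, fun g hg => ?_⟩
    have hf : ‖f‖ = ‖ν'‖ := by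
      have h := norm_smul ‖ν'‖ w
      rw [← hwf, h, Real.norm_eq_abs, abs_of_nonneg (norm_nonneg _), hw1, mul_one]
    rw [hf]; exact hlow g hg
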